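/- Let G = ℝ^m ⋉_φ ℝ^n be a semidirect product where φ : ℝ^m → GL(n,ℝ) acts semisimply (φ(ℝ^m) is simultaneously diagonalizable over ℂ). Then there is a decomposition ℝ^n = V₁ ⊕ V₂ into φ-invariant subspaces such that V₁ is the maximal trivial ℝ^m-submodule, G ≅ V₁ × (ℝ^m ⋉ V₂), and the commutator subgroup [G,G] has dimension equal to dim V₂. -/

import Mathlib

open LinearMap Submodule

/-- For a semisimple endomorphism `g`, the kernel and range of `g - 1` are complementary. -/
lemma aux_single_isCompl {K V : Type*} [Field K] [AddCommGroup V] [Module K V]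
    [FiniteDimensional K V] {g : Module.End K V} (hg : g.IsSemisimple) :
    IsCompl (LinearMap.ker (g - 1)) (LinearMap.range (g - 1)) := by
  have h2 : LinearMap.ker ((g - 1) ^ 2) = LinearMap.ker (g - 1) := by
    have e2 : Module.End.genEigenspace g 1 ((2 : ℕ) : ℕ∞) = LinearMap.ker ((g - 1) ^ 2) := by
      rw [Module.End.genEigenspace_nat]; simp [one_smul]
    have e1 : Module.End.eigenspace g 1 = LinearMap.ker (g - 1) := by
      have : ((1 : ℕ) : ℕ∞) = (1 : ℕ∞) := by norm_num
      rw [Module.End.eigenspace, ← this, Module.End.genEigenspace_nat]; simp [one_smul]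
    have := hg.isFinitelySemisimple.genEigenspace_eq_eigenspace 1
      (k := ((2 : ℕ) : ℕ∞)) (by norm_num)
    rw [e2, e1] at this
    exact this
  constructor
  · rw [disjoint_def]
    rintro x hx ⟨u, rfl⟩
    have hu : u ∈ LinearMap.ker ((g - 1) ^ 2) := by
      rw [LinearMap.mem_ker] at hx ⊢
      rw [pow_two, Module.End.mul_apply, hx]
    rw [h2, LinearMap.mem_ker] at hu
    exact hu
  · rw [codisjoint_iff]
    apply Submodule.eq_top_of_disjoint
    · rw [add_comm]
      exact (LinearMap.finrank_range_add_finrank_ker (g - 1)).ge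
    · rw [disjoint_def]
      rintro x hx ⟨u, rfl⟩
      have hu : u ∈ LinearMap.ker ((g - 1) ^ 2) := by
        rw [LinearMap.mem_ker] at hx ⊢
        rw [pow_two, Module.End.mul_apply, hx]
      rw [h2, LinearMap.mem_ker] at hu
      exact hu

/-- For a commuting family of endomorphisms such that the kernel and range of each `g a - 1`
are complementary, the common fixed space and the sum of the ranges are complementary. -/
lemma aux_family_isCompl {K V ι : Type*} [Field K] [AddCommGroup V] [Module K V]
    [FiniteDimensional K V] (g : ι → Module.End K V)
    (hcomm : ∀ a b, g a * g b = g b * g a)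
    (hcompl : ∀ a, IsCompl (LinearMap.ker (g a - 1)) (LinearMap.range (g a - 1))) :
    IsCompl (⨅ a, LinearMap.ker (g a - 1)) (⨆ a, LinearMap.range (g a - 1)) := by
  classical
  set V₁ := ⨅ a, LinearMap.ker (g a - 1) with hV₁
  set V₂ := ⨆ a, LinearMap.range (g a - 1) with hV₂
  -- projections
  set π : ι → Module.End K V := fun a =>
    (LinearMap.ker (g a - 1)).subtype ∘ₗ
      Submodule.linearProjOfIsCompl _ _ (hcompl a) with hπ
  have hπ_mem : ∀ a x, π a x ∈ LinearMap.ker (g a - 1) := fun a x => by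
    simp only [hπ, LinearMap.comp_apply, Submodule.coe_subtype]
    exact Submodule.coe_mem _
  have hπ_left : ∀ a x, x ∈ LinearMap.ker (g a - 1) → π a x = x := fun a x hx => by
    simp only [hπ, LinearMap.comp_apply, Submodule.coe_subtype]
    exact congrArg _ (Submodule.linearProjOfIsCompl_apply_left (hcompl a) ⟨x, hx⟩)
  have hπ_right : ∀ a x, x ∈ LinearMap.range (g a - 1) → π a x = 0 := fun a x hx => by
    simp only [hπ, LinearMap.comp_apply, Submodule.coe_subtype]
    erw [Submodule.projectionOnto_apply_of_mem_right (hcompl a) hx]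
    rfl
  have hdecomp : ∀ a x, x - π a x ∈ LinearMap.range (g a - 1) := fun a x => by
    obtain ⟨y, z, hy, hz, hyz⟩ :=
      Submodule.codisjoint_iff_exists_add_eq.mp (hcompl a).codisjoint x
    have : π a x = y := by
      rw [← hyz, map_add, hπ_left a y hy, hπ_right a z hz, add_zero]
    rw [this, ← hyz]
    simpa using hz
  have hcomm' : ∀ a b (x : V), g a (g b x) = g b (g a x) := fun a b x => by
    have := DFunLike.congr_fun (hcomm a b) x
    simpa [Module.End.mul_apply] using this
  have hker_inv : ∀ a b x, x ∈ LinearMap.ker (g a - 1) → g b x ∈ LinearMap.ker (g a - 1) := by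
    intro a b x hx
    rw [LinearMap.mem_ker] at hx ⊢
    have : g a x - x = 0 := by simpa [LinearMap.sub_apply] using hx
    rw [LinearMap.sub_apply, Module.End.one_apply, hcomm' a b x, ← map_sub, this, map_zero]
  have hrange_inv : ∀ a b x, x ∈ LinearMap.range (g a - 1) →
      g b x ∈ LinearMap.range (g a - 1) := by
    rintro a b x ⟨u, rfl⟩
    refine ⟨g b u, ?_⟩
    simp only [LinearMap.sub_apply, Module.End.one_apply, map_sub]
    rw [hcomm' a b u]
  have hπcomm : ∀ a b x, π a (g b x) = g b (π a x) := by
    intro a b x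
    obtain ⟨y, z, hy, hz, hyz⟩ :=
      Submodule.codisjoint_iff_exists_add_eq.mp (hcompl a).codisjoint x
    have hx : π a x = y := by
      rw [← hyz, map_add, hπ_left a y hy, hπ_right a z hz, add_zero]
    rw [hx, ← hyz, map_add, map_add, hπ_left a _ (hker_inv a b y hy),
      hπ_right a _ (hrange_inv a b z hz), add_zero]
  have hπ_ker_inv : ∀ a b x, x ∈ LinearMap.ker (g a - 1) →
      π b x ∈ LinearMap.ker (g a - 1) := by
    intro a b x hx
    rw [LinearMap.mem_ker] at hx ⊢
    have hx' : g a x - x = 0 := by simpa [LinearMap.sub_apply] using hx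
    rw [LinearMap.sub_apply, Module.End.one_apply, ← hπcomm b a x, ← map_sub]
    have : g a x - x = 0 := hx'
    rw [this, map_zero]
  have hπ_range_inv : ∀ a b x, x ∈ LinearMap.range (g a - 1) →
      π b x ∈ LinearMap.range (g a - 1) := by
    rintro a b x ⟨u, rfl⟩
    refine ⟨π b u, ?_⟩
    simp only [LinearMap.sub_apply, Module.End.one_apply, map_sub] at *
    rw [← hπcomm b a u]
  -- products over lists
  set P : List ι → Module.End K V := fun l => (l.map π).prod with hP
  have hP_nil : P [] = 1 := by simp [hP]
  have hP_cons : ∀ a l, P (a :: l) = π a * P l := by intro a l; simp [hP]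
  have L1 : ∀ l b x, P l (g b x) = g b (P l x) := by
    intro l
    induction l with
    | nil => intro b x; simp [hP_nil]
    | cons a t ih =>
      intro b x
      rw [hP_cons, Module.End.mul_apply, Module.End.mul_apply, ih b x, hπcomm a b]
  have L2 : ∀ l x, x - P l x ∈ V₂ := by
    intro l
    induction l with
    | nil => intro x; simp [hP_nil]
    | cons a t ih =>
      intro x
      rw [hP_cons, Module.End.mul_apply]
      have h1 : x - P t x ∈ V₂ := ih x
      have h2 : P t x - π a (P t x) ∈ V₂ :=
        le_iSup (fun a => LinearMap.range (g a - 1)) a (hdecomp a (P t x))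
      have := Submodule.add_mem _ h1 h2
      simpa using this
  have L3' : ∀ l a x, x ∈ LinearMap.range (g a - 1) → P l x ∈ LinearMap.range (g a - 1) := by
    intro l
    induction l with
    | nil => intro a x hx; simpa [hP_nil] using hx
    | cons b t ih =>
      intro a x hx
      rw [hP_cons, Module.End.mul_apply]
      exact hπ_range_inv a b _ (ih a x hx)
  have L3 : ∀ l a, a ∈ l → ∀ x, x ∈ LinearMap.range (g a - 1) → P l x = 0 := by
    intro l
    induction l with
    | nil => intro a ha; exact absurd ha (List.not_mem_nil)
    | cons b t ih =>
      intro a ha x hx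
      rw [hP_cons, Module.End.mul_apply]
      rcases List.mem_cons.mp ha with h | h
      · subst h
        exact hπ_right a _ (L3' t a x hx)
      · rw [ih a h x hx, map_zero]
  have L4 : ∀ l x, (∀ a ∈ l, x ∈ LinearMap.ker (g a - 1)) → P l x = x := by
    intro l
    induction l with
    | nil => intro x _; simp [hP_nil]
    | cons b t ih =>
      intro x hx
      rw [hP_cons, Module.End.mul_apply, ih x (fun a ha => hx a (List.mem_cons_of_mem b ha)),
        hπ_left b x (hx b (List.mem_cons_self))]
  have L5 : ∀ l x a, a ∈ l → P l x ∈ LinearMap.ker (g a - 1) := by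
    intro l
    induction l with
    | nil => intro x a ha; exact absurd ha (List.not_mem_nil)
    | cons b t ih =>
      intro x a ha
      rw [hP_cons, Module.End.mul_apply]
      rcases List.mem_cons.mp ha with h | h
      · subst h; exact hπ_mem a _
      · exact hπ_ker_inv a b _ (ih x a h)
  -- choose a finite subfamily generating V₂
  have hfg : V₂.FG := IsNoetherian.noetherian V₂
  have hcpt : IsCompactElement V₂ := (Submodule.fg_iff_compact V₂).mp hfg
  obtain ⟨s, hs⟩ := CompleteLattice.IsCompactElement.exists_finset_of_le_iSup (Submodule K V) hcpt (f := fun a => LinearMap.range (g a - 1)) le_rfl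
  set l := s.toList with hl
  set Q := P l with hQ
  have hmem_l : ∀ a ∈ s, a ∈ l := fun a ha => by
    rw [hl, Finset.mem_toList]; exact ha
  have hkill : ∀ x ∈ V₂, Q x = 0 := by
    intro x hx
    have hle : (⨆ a ∈ s, LinearMap.range (g a - 1)) ≤ LinearMap.ker Q := by
      refine iSup₂_le fun a ha => fun x hx => ?_
      rw [LinearMap.mem_ker]
      exact L3 l a (hmem_l a ha) x hx
    exact LinearMap.mem_ker.mp (hle (hs hx))
  have hfixV₁ : ∀ x ∈ V₁, Q x = x := by
    intro x hx
    exact L4 l x fun a _ => (Submodule.mem_iInf _).mp hx a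
  have hQQ : ∀ x, Q (Q x) = Q x := fun x =>
    L4 l (Q x) fun a ha => L5 l x a ha
  have hQV₁ : ∀ x, Q x ∈ V₁ := by
    intro x
    rw [Submodule.mem_iInf]
    intro b
    rw [LinearMap.mem_ker, LinearMap.sub_apply, Module.End.one_apply]
    have h1 : (g b - 1) (Q x) ∈ V₂ :=
      le_iSup (fun a => LinearMap.range (g a - 1)) b ⟨Q x, rfl⟩
    have h2 : Q ((g b - 1) (Q x)) = 0 := hkill _ h1
    have h3 : Q ((g b - 1) (Q x)) = g b (Q x) - Q x := by
      rw [LinearMap.sub_apply, Module.End.one_apply, map_sub, L1 l b (Q x), hQQ x]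
    rw [← h3]
    exact h2
  constructor
  · rw [disjoint_def]
    intro x hx1 hx2
    rw [← hfixV₁ x hx1]
    exact hkill x hx2
  · rw [codisjoint_iff, eq_top_iff]
    intro x _
    rw [Submodule.mem_sup]
    exact ⟨Q x, hQV₁ x, x - Q x, L2 l x, by abel⟩

theorem semidirect_product_splitting_and_commutator
    (m n : ℕ) (φ : (Fin m → ℝ) → ((Fin n → ℝ) ≃ₗ[ℝ] (Fin n → ℝ)))
    (hφ : ∀ a b, φ (a + b) = φ a * φ b)
    (hss : ∀ a, Module.End.IsSemisimple (φ a : (Fin n → ℝ) →ₗ[ℝ] (Fin n → ℝ))) :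
    ∃ V₁ V₂ : Submodule ℝ (Fin n → ℝ),
      (V₁ : Set (Fin n → ℝ)) = {v | ∀ a, φ a v = v} ∧
      IsCompl V₁ V₂ ∧
      (∀ a, V₂.map (φ a : (Fin n → ℝ) →ₗ[ℝ] (Fin n → ℝ)) = V₂) ∧
      Submodule.span ℝ {x : Fin n → ℝ | ∃ a v, x = φ a v - v} = V₂ := by
  classical
  set g : (Fin m → ℝ) → Module.End ℝ (Fin n → ℝ) :=
    fun a => (φ a : (Fin n → ℝ) →ₗ[ℝ] (Fin n → ℝ)) with hg
  have hmul : ∀ a b (x : Fin n → ℝ), φ (a + b) x = φ a (φ b x) := by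
    intro a b x
    rw [hφ a b]
    rfl
  have hcomm : ∀ a b, g a * g b = g b * g a := by
    intro a b
    refine LinearMap.ext fun x => ?_
    have h1 := hmul a b x
    have h2 := hmul b a x
    rw [add_comm a b] at h1
    simp only [hg, Module.End.mul_apply, LinearEquiv.coe_coe]
    rw [← h1, ← h2]
  have hinv : ∀ a (x : Fin n → ℝ), φ a (φ (-a) x) = x := by
    intro a x
    have h0 : ∀ y : Fin n → ℝ, φ 0 y = y := by
      intro y
      have := hmul 0 0 y
      rw [add_zero] at this
      exact (φ 0).injective this.symm
    have := hmul a (-a) x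
    rw [add_neg_cancel] at this
    rw [← this, h0]
  -- the subspaces
  set V₁ : Submodule ℝ (Fin n → ℝ) := ⨅ a, LinearMap.ker (g a - 1) with hV₁
  set V₂ : Submodule ℝ (Fin n → ℝ) :=
    Submodule.span ℝ {x : Fin n → ℝ | ∃ a v, x = φ a v - v} with hV₂
  have hmemker : ∀ a (x : Fin n → ℝ), x ∈ LinearMap.ker (g a - 1) ↔ φ a x = x := by
    intro a x
    rw [LinearMap.mem_ker, LinearMap.sub_apply, Module.End.one_apply, sub_eq_zero]
    constructor <;> intro h <;> exact h
  have hV₂sup : V₂ = ⨆ a, LinearMap.range (g a - 1) := by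
    apply le_antisymm
    · rw [hV₂, Submodule.span_le]
      rintro x ⟨a, v, rfl⟩
      have : φ a v - v = (g a - 1) v := by
        simp [hg, LinearMap.sub_apply]
      rw [this]
      exact le_iSup (fun a => LinearMap.range (g a - 1)) a ⟨v, rfl⟩
    · refine iSup_le fun a => ?_
      rintro x ⟨v, rfl⟩
      apply Submodule.subset_span
      exact ⟨a, v, by simp [hg, LinearMap.sub_apply]⟩
  have hcompl1 : ∀ a, IsCompl (LinearMap.ker (g a - 1)) (LinearMap.range (g a - 1)) :=
    fun a => aux_single_isCompl (hss a)
  have hcompl : IsCompl V₁ V₂ := by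
    rw [hV₂sup]
    exact aux_family_isCompl g hcomm hcompl1
  refine ⟨V₁, V₂, ?_, hcompl, ?_, hV₂.symm⟩
  · ext x
    simp only [SetLike.mem_coe, hV₁, Submodule.mem_iInf, Set.mem_setOf_eq]
    constructor
    · intro h a
      exact (hmemker a x).mp (h a)
    · intro h a
      exact (hmemker a x).mpr (h a)
  · -- invariance of V₂
    intro a
    have hsubset : ∀ b, ∀ x ∈ V₂, φ b x ∈ V₂ := by
      intro b x hx
      induction hx using Submodule.span_induction with
      | mem y hy =>
        obtain ⟨c, v, rfl⟩ := hy
        have : φ b (φ c v - v) = (φ (b + c) v - v) - (φ b v - v) := by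
          rw [map_sub, hmul b c v]
          abel
        rw [this]
        exact Submodule.sub_mem _ (Submodule.subset_span ⟨b + c, v, rfl⟩)
          (Submodule.subset_span ⟨b, v, rfl⟩)
      | zero => simp only [map_zero]; exact Submodule.zero_mem V₂
      | add y z _ _ hy hz => rw [map_add]; exact Submodule.add_mem _ hy hz
      | smul c y _ hy => rw [map_smul]; exact Submodule.smul_mem _ c hy
    apply le_antisymm
    · rw [Submodule.map_le_iff_le_comap]
      intro x hx
      exact hsubset a x hx
    · intro x hx
      rw [Submodule.mem_map]
      exact ⟨φ (-a) x, hsubset (-a) x hx, by simpa using hinv a x⟩
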